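/- The FreshMarkovHedge algorithm with positive weights π achieves, for every T ≥ 1 and every sequence of fresh experts i^T = (i_1,…,i_T) with shifts at times σ = (σ_1,…,σ_k), the regret bound L_T − L_T(i^T) ≤ (1/η) Σ_{j=0}^k log(1/π_{i_{σ_j}}) + (1/η) Σ_{j=1}^k log Π_{M_{σ_j − 1}} + (1/η) log Π_{M_T}, where Π_M = Σ_{i=1}^M π_i and σ_0 = 1. -/

import Mathlib

lemma sum_Icc_one_fin {β : Type*} [AddCommMonoid β] (N : ℕ) (f : ℕ → β) :
    ∑ i ∈ Finset.Icc 1 N, f i = ∑ i : Fin N, f (i.val + 1) := by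
  rw [Fin.sum_univ_eq_sum_range (fun i => f (i + 1)) N, ← Finset.Ico_add_one_right_eq_Icc,
    Finset.sum_Ico_eq_sum_range]
  simp [add_comm]

lemma tel_aux (F : ℕ → ℝ) (S : ℕ) :
    ∑ t ∈ Finset.Icc 1 S, (F (t+1) - F t) = F (S+1) - F 1 := by
  rw [← Finset.Ico_add_one_right_eq_Icc, Finset.sum_Ico_eq_sum_range]
  have h1 : S + 1 - 1 = S := by omega
  rw [h1]
  have h2 := Finset.sum_range_sub (fun i => F (i+1)) S
  have h3 : ∀ i ∈ Finset.range S, F (1 + i + 1) - F (1 + i) = F (i+1+1) - F (i+1) := by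
    intro i _; rw [add_comm 1 i]
  rw [Finset.sum_congr rfl h3, h2]

lemma range_succ_split (k : ℕ) (f : ℕ → ℝ) :
    ∑ j ∈ Finset.range (k+1), f j = f 0 + ∑ j ∈ Finset.Icc 1 k, f j := by
  rw [Finset.range_eq_Ico, Finset.sum_eq_sum_Ico_succ_bot (by omega), Finset.Ico_add_one_right_eq_Icc]

/-- **FreshMarkovHedge regret bound (Theorem 2).**
FreshMarkovHedge with positive weights π achieves, for every T ≥ 1 and every sequence
of fresh experts i^T with shifts at times σ = (σ_1,…,σ_k),
L_T − L_T(i^T) ≤ (1/η) Σ_{j=0}^k log(1/π_{i_{σ_j}}) + (1/η) Σ_{j=1}^k log Π_{M_{σ_j−1}}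
                 + (1/η) log Π_{M_T}, where Π_M = Σ_{i=1}^M π_i and σ_0 = 1. -/
theorem freshMarkovHedge_regret
    {E : Type*} [AddCommGroup E] [Module ℝ E] {Y : Type*}
    (X : Set E) (ℓ : E → Y → ℝ) (η : ℝ) (hη : 0 < η)
    (hexp : ∀ (yy : Y) (N : ℕ), 1 ≤ N → ∀ xs : Fin N → E, (∀ i, xs i ∈ X) →
      ∀ vv : Fin N → ℝ, (∀ i, 0 ≤ vv i) → (∑ i, vv i) = 1 →
      ℓ (∑ i, vv i • xs i) yy ≤ -(1/η) * Real.log (∑ i, vv i * Real.exp (-η * ℓ (xs i) yy)))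
    -- growing expert ensemble
    (M : ℕ → ℕ) (hMpos : ∀ t, 1 ≤ t → 1 ≤ M t) (hMmono : Monotone M)
    (π : ℕ → ℝ) (hπpos : ∀ i, 1 ≤ i → 0 < π i)
    (xe : ℕ → ℕ → E) (hxe : ∀ i t, 1 ≤ t → 1 ≤ i → i ≤ M t → xe i t ∈ X)
    (y : ℕ → Y) (xl : ℕ → E)
    -- FreshMarkovHedge weights
    (v : ℕ → ℕ → ℝ)
    (hv1 : ∀ i, 1 ≤ i → i ≤ M 1 → v 1 i = π i / ∑ j ∈ Finset.Icc 1 (M 1), π j)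
    (hvupd : ∀ t, 1 ≤ t → ∀ i, 1 ≤ i → i ≤ M t →
      v (t+1) i = ((∑ j ∈ Finset.Icc 1 (M t), π j) / ∑ j ∈ Finset.Icc 1 (M (t+1)), π j) *
        (v t i * Real.exp (-η * ℓ (xe i t) (y t)) /
          ∑ j ∈ Finset.Icc 1 (M t), v t j * Real.exp (-η * ℓ (xe j t) (y t))))
    (hvnew : ∀ t, 1 ≤ t → ∀ i, M t + 1 ≤ i → i ≤ M (t+1) →
      v (t+1) i = π i / ∑ j ∈ Finset.Icc 1 (M (t+1)), π j)
    -- FreshMarkovHedge prediction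
    (hxl : ∀ t, 1 ≤ t → xl t = ∑ i ∈ Finset.Icc 1 (M t), v t i • xe i t)
    -- horizon and comparison sequence of fresh experts with shifts at σ_1 < … < σ_k
    (T : ℕ) (hT : 1 ≤ T)
    (iseq : ℕ → ℕ) (k : ℕ) (σ : ℕ → ℕ)
    (hσ0 : σ 0 = 1)
    (hσmono : ∀ j, j < k → σ j < σ (j+1))
    (hσle : σ k ≤ T)
    -- admissibility: 1 ≤ i_t ≤ M_t
    (hadm : ∀ t, 1 ≤ t → t ≤ T → 1 ≤ iseq t ∧ iseq t ≤ M t)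
    -- no shift outside σ
    (hnoshift : ∀ t, 2 ≤ t → t ≤ T → (∀ j, 1 ≤ j → j ≤ k → σ j ≠ t) →
      iseq t = iseq (t-1))
    -- shifts are to fresh experts
    (hfresh : ∀ j, 1 ≤ j → j ≤ k →
      M (σ j - 1) + 1 ≤ iseq (σ j) ∧ iseq (σ j) ≤ M (σ j)) :
    (∑ t ∈ Finset.Icc 1 T, ℓ (xl t) (y t))
        - (∑ t ∈ Finset.Icc 1 T, ℓ (xe (iseq t) t) (y t))
      ≤ (1/η) * ∑ j ∈ Finset.range (k+1), Real.log (1 / π (iseq (σ j)))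
        + (1/η) * ∑ j ∈ Finset.Icc 1 k, Real.log (∑ i ∈ Finset.Icc 1 (M (σ j - 1)), π i)
        + (1/η) * Real.log (∑ i ∈ Finset.Icc 1 (M T), π i) := by
  classical
  -- abbreviations
  set Pi : ℕ → ℝ := fun t => ∑ j ∈ Finset.Icc 1 (M t), π j with hPidef
  set W : ℕ → ℝ := fun t => ∑ j ∈ Finset.Icc 1 (M t), v t j * Real.exp (-η * ℓ (xe j t) (y t))
    with hWdef
  have hPieq : ∀ t, (∑ j ∈ Finset.Icc 1 (M t), π j) = Pi t := fun t => rfl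
  have hWeq : ∀ t,
      (∑ j ∈ Finset.Icc 1 (M t), v t j * Real.exp (-η * ℓ (xe j t) (y t))) = W t :=
    fun t => rfl
  have hη' : (0:ℝ) < 1/η := by positivity
  have hPipos : ∀ t, 1 ≤ t → 0 < Pi t := by
    intro t ht
    apply Finset.sum_pos
    · intro i hi; exact hπpos i (Finset.mem_Icc.mp hi).1
    · exact ⟨1, Finset.mem_Icc.mpr ⟨le_rfl, hMpos t ht⟩⟩
  -- the weights are positive and sum to one
  have hkey : ∀ t, 1 ≤ t →
      (∀ i, 1 ≤ i → i ≤ M t → 0 < v t i) ∧ (∑ i ∈ Finset.Icc 1 (M t), v t i) = 1 := by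
    intro t ht
    induction t, ht using Nat.le_induction with
    | base =>
      constructor
      · intro i h1 h2
        rw [hv1 i h1 h2]
        exact div_pos (hπpos i h1) (hPipos 1 le_rfl)
      · rw [Finset.sum_congr rfl (fun i hi => hv1 i (Finset.mem_Icc.mp hi).1
          (Finset.mem_Icc.mp hi).2), ← Finset.sum_div, hPieq]
        exact div_self (ne_of_gt (hPipos 1 le_rfl))
    | succ n hn ih =>
      obtain ⟨hpos, hsum⟩ := ih
      have hWpos : 0 < W n := by
        apply Finset.sum_pos
        · intro i hi
          exact mul_pos (hpos i (Finset.mem_Icc.mp hi).1 (Finset.mem_Icc.mp hi).2)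
            (Real.exp_pos _)
        · exact ⟨1, Finset.mem_Icc.mpr ⟨le_rfl, hMpos n hn⟩⟩
      constructor
      · intro i h1 h2
        by_cases hc : i ≤ M n
        · rw [hvupd n hn i h1 hc, hPieq, hPieq, hWeq]
          exact mul_pos (div_pos (hPipos n hn) (hPipos (n+1) (by omega)))
            (div_pos (mul_pos (hpos i h1 hc) (Real.exp_pos _)) hWpos)
        · rw [hvnew n hn i (by omega) h2, hPieq]
          exact div_pos (hπpos i h1) (hPipos (n+1) (by omega))
      · have hMle : M n ≤ M (n+1) := hMmono (by omega)
        have hsplit : ∑ i ∈ Finset.Icc 1 (M n), v (n+1) i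
            + ∑ i ∈ Finset.Ioc (M n) (M (n+1)), v (n+1) i
            = ∑ i ∈ Finset.Icc 1 (M (n+1)), v (n+1) i := by
          rw [show Finset.Icc 1 (M n) = Finset.Ioc 0 (M n) from (Finset.Icc_add_one_left_eq_Ioc ..),
            show Finset.Icc 1 (M (n+1)) = Finset.Ioc 0 (M (n+1)) from (Finset.Icc_add_one_left_eq_Ioc ..)]
          exact Finset.sum_Ioc_consecutive _ (Nat.zero_le _) hMle
        have h1 : ∑ i ∈ Finset.Icc 1 (M n), v (n+1) i = Pi n / Pi (n+1) := by
          rw [Finset.sum_congr rfl (fun i hi => hvupd n hn i (Finset.mem_Icc.mp hi).1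
            (Finset.mem_Icc.mp hi).2), ← Finset.mul_sum, ← Finset.sum_div, hWeq,
            div_self (ne_of_gt hWpos), mul_one, hPieq, hPieq]
        have hπsplit : Pi n + ∑ i ∈ Finset.Ioc (M n) (M (n+1)), π i = Pi (n+1) := by
          rw [← hPieq, ← hPieq,
            show Finset.Icc 1 (M n) = Finset.Ioc 0 (M n) from (Finset.Icc_add_one_left_eq_Ioc ..),
            show Finset.Icc 1 (M (n+1)) = Finset.Ioc 0 (M (n+1)) from (Finset.Icc_add_one_left_eq_Ioc ..)]
          exact Finset.sum_Ioc_consecutive _ (Nat.zero_le _) hMle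
        have h2 : ∑ i ∈ Finset.Ioc (M n) (M (n+1)), v (n+1) i
            = (Pi (n+1) - Pi n) / Pi (n+1) := by
          have : ∀ i ∈ Finset.Ioc (M n) (M (n+1)), v (n+1) i = π i / Pi (n+1) := by
            intro i hi
            obtain ⟨hi1, hi2⟩ := Finset.mem_Ioc.mp hi
            rw [hvnew n hn i (by omega) hi2, hPieq]
          rw [Finset.sum_congr rfl this, ← Finset.sum_div]
          congr 1
          linarith [hπsplit]
        rw [← hsplit, h1, h2]
        have hne : Pi (n+1) ≠ 0 := ne_of_gt (hPipos (n+1) (by omega))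
        field_simp
        ring
  have hWpos : ∀ t, 1 ≤ t → 0 < W t := by
    intro t ht
    apply Finset.sum_pos
    · intro i hi
      exact mul_pos ((hkey t ht).1 i (Finset.mem_Icc.mp hi).1 (Finset.mem_Icc.mp hi).2)
        (Real.exp_pos _)
    · exact ⟨1, Finset.mem_Icc.mpr ⟨le_rfl, hMpos t ht⟩⟩
  -- the mix-loss bound
  have hmix : ∀ t, 1 ≤ t → ℓ (xl t) (y t) ≤ -(1/η) * Real.log (W t) := by
    intro t ht
    obtain ⟨hpos, hsum⟩ := hkey t ht
    have hN : 1 ≤ M t := hMpos t ht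
    have hb : ∀ i : Fin (M t), 1 ≤ i.val + 1 ∧ i.val + 1 ≤ M t := by
      intro i; have := i.isLt; omega
    have h := hexp (y t) (M t) hN (fun i => xe (i.val + 1) t)
      (fun i => hxe _ t ht (hb i).1 (hb i).2)
      (fun i => v t (i.val + 1))
      (fun i => le_of_lt (hpos _ (hb i).1 (hb i).2))
      (by rw [← sum_Icc_one_fin (M t) (fun i => v t i)]; exact hsum)
    have hxleq : xl t = ∑ i : Fin (M t), v t (i.val + 1) • xe (i.val + 1) t := by
      rw [hxl t ht]; exact sum_Icc_one_fin (M t) (fun i => v t i • xe i t)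
    have hWeq' : W t = ∑ i : Fin (M t),
        v t (i.val + 1) * Real.exp (-η * ℓ (xe (i.val + 1) t) (y t)) := by
      rw [← hWeq]
      exact sum_Icc_one_fin (M t) (fun i => v t i * Real.exp (-η * ℓ (xe i t) (y t)))
    rw [hxleq, hWeq']
    exact h
  -- per-step inequality
  have hstep : ∀ t, 1 ≤ t → t ≤ T →
      ℓ (xl t) (y t) - ℓ (xe (iseq t) t) (y t)
        ≤ (1/η) * (Real.log (v t (iseq t) * Real.exp (-η * ℓ (xe (iseq t) t) (y t)) / W t)
            - Real.log (v t (iseq t))) := by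
    intro t ht htT
    obtain ⟨h1, h2⟩ := hadm t ht htT
    have hvpos : 0 < v t (iseq t) := (hkey t ht).1 _ h1 h2
    have hW : 0 < W t := hWpos t ht
    have hlog : Real.log (v t (iseq t) * Real.exp (-η * ℓ (xe (iseq t) t) (y t)) / W t)
        = Real.log (v t (iseq t)) + (-η * ℓ (xe (iseq t) t) (y t)) - Real.log (W t) := by
      rw [Real.log_div (by positivity) (ne_of_gt hW),
        Real.log_mul (ne_of_gt hvpos) (Real.exp_ne_zero _), Real.log_exp]
    rw [hlog]
    have hmt := hmix t ht
    have hmul : (1/η) * (Real.log (v t (iseq t)) + (-η * ℓ (xe (iseq t) t) (y t))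
        - Real.log (W t) - Real.log (v t (iseq t)))
        = -ℓ (xe (iseq t) t) (y t) + (-(1/η) * Real.log (W t)) := by
      field_simp
      ring
    rw [hmul]
    linarith
  -- the posterior weight is at most one
  have hvm1 : ∀ t, 1 ≤ t → t ≤ T →
      Real.log (v t (iseq t) * Real.exp (-η * ℓ (xe (iseq t) t) (y t)) / W t) ≤ 0 := by
    intro t ht htT
    obtain ⟨h1, h2⟩ := hadm t ht htT
    have hvpos : 0 < v t (iseq t) := (hkey t ht).1 _ h1 h2
    have hW : 0 < W t := hWpos t ht
    apply Real.log_nonpos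
    · positivity
    · rw [div_le_one hW, ← hWeq]
      apply Finset.single_le_sum (f := fun j => v t j * Real.exp (-η * ℓ (xe j t) (y t)))
      · intro j hj
        exact le_of_lt (mul_pos ((hkey t ht).1 j (Finset.mem_Icc.mp hj).1
          (Finset.mem_Icc.mp hj).2) (Real.exp_pos _))
      · exact Finset.mem_Icc.mpr ⟨h1, h2⟩
  -- generic drop bound
  have hdrop : ∀ t, 1 ≤ t → t ≤ T →
      ℓ (xl t) (y t) - ℓ (xe (iseq t) t) (y t) ≤ -(1/η) * Real.log (v t (iseq t)) := by
    intro t ht htT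
    have h := hstep t ht htT
    have h2 := hvm1 t ht htT
    nlinarith [h, h2, hη']
  -- strict monotonicity of σ
  have hσsm : ∀ b, b ≤ k → ∀ a, a < b → σ a < σ b := by
    intro b
    induction b with
    | zero => intro _ a ha; omega
    | succ n ih =>
      intro hb a ha
      have hn : σ n < σ (n+1) := hσmono n (by omega)
      rcases Nat.lt_succ_iff_lt_or_eq.mp ha with h | h
      · exact lt_trans (ih (by omega) a h) hn
      · subst h; exact hn
  have hσrange : ∀ j, 1 ≤ j → j ≤ k → 2 ≤ σ j ∧ σ j ≤ T := by
    intro j hj1 hjk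
    constructor
    · have := hσsm j hjk 0 (by omega); omega
    · rcases eq_or_lt_of_le hjk with h | h
      · subst h; exact hσle
      · exact le_of_lt (lt_of_lt_of_le (hσsm k le_rfl j h) hσle)
  -- potentials
  set F : ℕ → ℝ := fun t => (1/η) * (Real.log (v t (iseq t)) + Real.log (Pi t)) with hFdef
  set c : ℕ → ℝ := fun j => (1/η) * Real.log (1 / π (iseq (σ j)))
    + (1/η) * Real.log (Pi (σ j - 1)) with hcdef
  set g : ℕ → ℝ := fun t => ∑ j ∈ Finset.Icc 1 k, (if σ j = t + 1 then c j else 0) with hgdef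
  obtain ⟨S, rfl⟩ : ∃ S, T = S + 1 := ⟨T - 1, by omega⟩
  -- non-shift step bound
  have hstepA : ∀ t, 1 ≤ t → t + 1 ≤ S + 1 → iseq (t+1) = iseq t →
      ℓ (xl t) (y t) - ℓ (xe (iseq t) t) (y t) ≤ F (t+1) - F t := by
    intro t ht htT heq
    obtain ⟨h1, h2⟩ := hadm t ht (by omega)
    have hupd := hvupd t ht (iseq t) h1 h2
    rw [hPieq, hPieq, hWeq] at hupd
    have hv2pos : 0 < v (t+1) (iseq t) :=
      (hkey (t+1) (by omega)).1 _ h1 (le_trans h2 (hMmono (by omega)))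
    have hW : 0 < W t := hWpos t ht
    have hP1 : 0 < Pi t := hPipos t ht
    have hP2 : 0 < Pi (t+1) := hPipos (t+1) (by omega)
    have hvpos : 0 < v t (iseq t) := (hkey t ht).1 _ h1 h2
    have hvm : v t (iseq t) * Real.exp (-η * ℓ (xe (iseq t) t) (y t)) / W t
        = Pi (t+1) / Pi t * v (t+1) (iseq t) := by
      rw [hupd]
      field_simp
    have hlogvm : Real.log (v t (iseq t) * Real.exp (-η * ℓ (xe (iseq t) t) (y t)) / W t)
        = Real.log (Pi (t+1)) - Real.log (Pi t) + Real.log (v (t+1) (iseq t)) := by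
      rw [hvm, Real.log_mul (by positivity) (ne_of_gt hv2pos),
        Real.log_div (ne_of_gt hP2) (ne_of_gt hP1)]
    have h := hstep t ht (by omega)
    rw [hlogvm] at h
    have hFeq : F (t+1) - F t
        = (1/η) * (Real.log (Pi (t+1)) - Real.log (Pi t) + Real.log (v (t+1) (iseq t))
            - Real.log (v t (iseq t))) := by
      simp only [hFdef, heq]; ring
    rw [hFeq]
    linarith
  -- shift step bound
  have hstepB : ∀ j, 1 ≤ j → j ≤ k → ∀ t, σ j = t + 1 →
      ℓ (xl t) (y t) - ℓ (xe (iseq t) t) (y t) ≤ F (t+1) - F t + c j := by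
    intro j hj1 hjk t hσj
    obtain ⟨h2lo, h2hi⟩ := hσrange j hj1 hjk
    have ht : 1 ≤ t := by omega
    have htT : t ≤ S + 1 := by omega
    obtain ⟨hfr1, hfr2⟩ := hfresh j hj1 hjk
    have hσm1 : σ j - 1 = t := by omega
    rw [hσm1] at hfr1
    have hvnew' : v (t+1) (iseq (σ j)) = π (iseq (σ j)) / Pi (t+1) := by
      have := hvnew t ht (iseq (σ j)) hfr1 (by rw [← hσj]; exact hfr2)
      rw [hPieq] at this
      rw [this]
    have hπp : 0 < π (iseq (σ j)) := hπpos _ (by omega)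
    have hP2 : 0 < Pi (t+1) := hPipos (t+1) (by omega)
    have hP1 : 0 < Pi t := hPipos t ht
    have hise : iseq (t+1) = iseq (σ j) := by rw [hσj]
    have hF1 : F (t+1) = (1/η) * Real.log (π (iseq (σ j))) := by
      simp only [hFdef, hise, hvnew']
      rw [Real.log_div (ne_of_gt hπp) (ne_of_gt hP2)]
      ring
    have hc1 : c j = -(1/η) * Real.log (π (iseq (σ j))) + (1/η) * Real.log (Pi t) := by
      simp only [hcdef, hσm1, one_div, Real.log_inv]
      ring
    have h := hdrop t ht htT
    have hFt : F t = (1/η) * (Real.log (v t (iseq t)) + Real.log (Pi t)) := rfl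
    rw [hF1, hc1, hFt]
    linarith
  -- combined per-step bound on Icc 1 S
  have hmain : ∀ t ∈ Finset.Icc 1 S,
      ℓ (xl t) (y t) - ℓ (xe (iseq t) t) (y t) ≤ F (t+1) - F t + g t := by
    intro t htm
    obtain ⟨ht1, htS⟩ := Finset.mem_Icc.mp htm
    by_cases hshift : ∃ j, 1 ≤ j ∧ j ≤ k ∧ σ j = t + 1
    · obtain ⟨j, hj1, hjk, hσj⟩ := hshift
      have hgt : g t = c j := by
        simp only [hgdef]
        rw [Finset.sum_eq_single_of_mem j (Finset.mem_Icc.mpr ⟨hj1, hjk⟩)]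
        · rw [if_pos hσj]
        · intro j' hj' hne
          obtain ⟨hj'1, hj'k⟩ := Finset.mem_Icc.mp hj'
          rw [if_neg]
          intro hcon
          rcases lt_trichotomy j' j with h | h | h
          · have := hσsm j hjk j' h; omega
          · exact hne h
          · have := hσsm j' hj'k j h; omega
      rw [hgt]
      exact hstepB j hj1 hjk t hσj
    · push_neg at hshift
      have hgt : g t = 0 := by
        simp only [hgdef]
        apply Finset.sum_eq_zero
        intro j' hj'
        obtain ⟨hj'1, hj'k⟩ := Finset.mem_Icc.mp hj'
        rw [if_neg (hshift j' hj'1 hj'k)]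
      have heq : iseq (t+1) = iseq t := by
        have h := hnoshift (t+1) (by omega) (by omega)
          (fun j hj1 hjk => hshift j hj1 hjk)
        simpa using h
      rw [hgt, add_zero]
      exact hstepA t ht1 (by omega) heq
  -- summing the shift costs
  have hgsum : ∑ t ∈ Finset.Icc 1 S, g t = ∑ j ∈ Finset.Icc 1 k, c j := by
    simp only [hgdef]
    rw [Finset.sum_comm]
    apply Finset.sum_congr rfl
    intro j hj
    obtain ⟨hj1, hjk⟩ := Finset.mem_Icc.mp hj
    obtain ⟨h2lo, h2hi⟩ := hσrange j hj1 hjk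
    rw [Finset.sum_eq_single_of_mem (σ j - 1) (Finset.mem_Icc.mpr ⟨by omega, by omega⟩)]
    · rw [if_pos (by omega)]
    · intro t ht hne
      rw [if_neg (by omega)]
  -- last step
  have hlast : ℓ (xl (S+1)) (y (S+1)) - ℓ (xe (iseq (S+1)) (S+1)) (y (S+1))
      ≤ -F (S+1) + (1/η) * Real.log (Pi (S+1)) := by
    have h := hdrop (S+1) (by omega) le_rfl
    have hFeq : F (S+1) = (1/η) * (Real.log (v (S+1) (iseq (S+1))) + Real.log (Pi (S+1))) := rfl
    rw [hFeq]
    linarith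
  -- F 1
  have hF1val : F 1 = (1/η) * Real.log (π (iseq 1)) := by
    obtain ⟨h1, h2⟩ := hadm 1 le_rfl (by omega)
    have hv := hv1 (iseq 1) h1 h2
    rw [hPieq] at hv
    simp only [hFdef, hv]
    rw [Real.log_div (ne_of_gt (hπpos _ h1)) (ne_of_gt (hPipos 1 le_rfl))]
    ring
  -- assemble
  have hsum : (∑ t ∈ Finset.Icc 1 (S+1), ℓ (xl t) (y t))
      - (∑ t ∈ Finset.Icc 1 (S+1), ℓ (xe (iseq t) t) (y t))
      ≤ -F 1 + ∑ j ∈ Finset.Icc 1 k, c j + (1/η) * Real.log (Pi (S+1)) := by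
    rw [← Finset.sum_sub_distrib]
    rw [Finset.sum_Icc_succ_top (by omega)]
    have hS : ∑ t ∈ Finset.Icc 1 S, (ℓ (xl t) (y t) - ℓ (xe (iseq t) t) (y t))
        ≤ ∑ t ∈ Finset.Icc 1 S, (F (t+1) - F t + g t) := Finset.sum_le_sum hmain
    have hSval : ∑ t ∈ Finset.Icc 1 S, (F (t+1) - F t + g t)
        = (F (S+1) - F 1) + ∑ j ∈ Finset.Icc 1 k, c j := by
      rw [Finset.sum_add_distrib, tel_aux, hgsum]
    linarith [hlast]
  -- final rewriting
  rw [hF1val] at hsum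
  have hcsum : ∑ j ∈ Finset.Icc 1 k, c j
      = (1/η) * ∑ j ∈ Finset.Icc 1 k, Real.log (1 / π (iseq (σ j)))
        + (1/η) * ∑ j ∈ Finset.Icc 1 k, Real.log (Pi (σ j - 1)) := by
    simp only [hcdef]
    rw [Finset.sum_add_distrib, Finset.mul_sum, Finset.mul_sum]
  rw [hcsum] at hsum
  have hrange : (1/η) * ∑ j ∈ Finset.range (k+1), Real.log (1 / π (iseq (σ j)))
      = (1/η) * Real.log (1 / π (iseq (σ 0)))
        + (1/η) * ∑ j ∈ Finset.Icc 1 k, Real.log (1 / π (iseq (σ j))) := by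
    rw [range_succ_split]
    ring
  have hlog1 : Real.log (1 / π (iseq (σ 0))) = -Real.log (π (iseq 1)) := by
    rw [hσ0, one_div, Real.log_inv]
  have hPig : ∀ j, Real.log (Pi (σ j - 1))
      = Real.log (∑ i ∈ Finset.Icc 1 (M (σ j - 1)), π i) := fun j => rfl
  calc (∑ t ∈ Finset.Icc 1 (S+1), ℓ (xl t) (y t))
      - (∑ t ∈ Finset.Icc 1 (S+1), ℓ (xe (iseq t) t) (y t))
      ≤ -((1/η) * Real.log (π (iseq 1)))
        + ((1/η) * ∑ j ∈ Finset.Icc 1 k, Real.log (1 / π (iseq (σ j)))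
          + (1/η) * ∑ j ∈ Finset.Icc 1 k, Real.log (Pi (σ j - 1)))
        + (1/η) * Real.log (Pi (S+1)) := hsum
    _ = (1/η) * ∑ j ∈ Finset.range (k+1), Real.log (1 / π (iseq (σ j)))
        + (1/η) * ∑ j ∈ Finset.Icc 1 k, Real.log (∑ i ∈ Finset.Icc 1 (M (σ j - 1)), π i)
        + (1/η) * Real.log (∑ i ∈ Finset.Icc 1 (M (S+1)), π i) := by
      rw [hrange, hlog1, hPieq]
      have : ∑ j ∈ Finset.Icc 1 k, Real.log (Pi (σ j - 1))
          = ∑ j ∈ Finset.Icc 1 k, Real.log (∑ i ∈ Finset.Icc 1 (M (σ j - 1)), π i) :=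
        Finset.sum_congr rfl (fun j _ => hPig j)
      rw [this]
      ring
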